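/- Let (X,d) be a distance space such that (T_d,d∞) is a metric space (T_d is non-empty and d∞(f,g) < ∞ for all f,g ∈ T_d). Then there exists a map φ : P_d → T_d such that for all f,g ∈ P_d, φ(f) ⪯ f and d∞(φ(f),φ(g)) ≤ d∞(f,g). -/
import Mathlib


open scoped ENNReal

section CoreDefs

variable {Y : Type*}

/-- A distance space: symmetric, nonnegative, vanishing on the diagonal. -/
def IsDistance (d : Y → Y → ℝ) : Prop :=
  (∀ x y, 0 ≤ d x y) ∧ (∀ x y, d x y = d y x) ∧ ∀ x, d x x = 0

/-- The set `P_d` of functions dominating the distance `d`. -/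
def Pd (d : Y → Y → ℝ) : Set (Y → ℝ) :=
  {f | ∀ x y, d x y ≤ f x + f y}

/-- The tight span `T_d`: pointwise-minimal elements of `P_d`. -/
def Td (d : Y → Y → ℝ) : Set (Y → ℝ) :=
  {f | f ∈ Pd d ∧ ∀ g ∈ Pd d, g ≤ f → g = f}

/-- The sup-distance `d∞(f,g) = sup_x |f x - g x|`, valued in `[0,∞]`. -/
noncomputable def dInfty (f g : Y → ℝ) : ℝ≥0∞ :=
  ⨆ y, edist (f y) (g y)

/-- `κ(x) = {f ∈ T_d : f x = 0}`. -/
def kappa (d : Y → Y → ℝ) (x : Y) : Set (Y → ℝ) :=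
  {f | f ∈ Td d ∧ f x = 0}

/-- A pseudometric: symmetric, nonnegative, vanishing on the diagonal,
satisfying the triangle inequality. -/
def IsPseudometric (ρ : Y → Y → ℝ) : Prop :=
  (∀ x y, 0 ≤ ρ x y) ∧ (∀ x y, ρ x y = ρ y x) ∧ (∀ x, ρ x x = 0) ∧
  ∀ x y z, ρ x z ≤ ρ x y + ρ y z

/-- `M(d)`: the set of pseudometrics dominating `d`. -/
def Md (d : Y → Y → ℝ) : Set (Y → Y → ℝ) :=
  {ρ | IsPseudometric ρ ∧ ∀ x y, d x y ≤ ρ x y}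

end CoreDefs

section AuxStatement9

variable {X : Type*} {d : X → X → ℝ}

lemma Pd_nonneg' (hd : IsDistance d) {f : X → ℝ} (hf : f ∈ Pd d) (x : X) : 0 ≤ f x := by
  have h := hf x x
  rw [hd.2.2 x] at h; linarith

lemma dInfty_self' (f : X → ℝ) : dInfty f f = 0 := by
  simp [dInfty]

lemma dInfty_comm' (f g : X → ℝ) : dInfty f g = dInfty g f := by
  simp [dInfty, edist_comm]

lemma abs_le_of_le_dInfty' {f g : X → ℝ} {D : ℝ≥0∞} (hD : D ≠ ⊤) (h : dInfty f g ≤ D)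
    (x : X) : |f x - g x| ≤ D.toReal := by
  have h1 : edist (f x) (g x) ≤ D :=
    le_trans (le_iSup (fun y => edist (f y) (g y)) x) h
  have h2 := ENNReal.toReal_mono hD h1
  rwa [edist_dist, ENNReal.toReal_ofReal dist_nonneg, Real.dist_eq] at h2

lemma dInfty_le_ofReal' {f g : X → ℝ} {r : ℝ} (h : ∀ x, |f x - g x| ≤ r) :
    dInfty f g ≤ ENNReal.ofReal r := by
  refine iSup_le fun x => ?_
  rw [edist_dist, Real.dist_eq]
  exact ENNReal.ofReal_le_ofReal (h x)

lemma dInfty_triangle' (f g h : X → ℝ) : dInfty f h ≤ dInfty f g + dInfty g h := by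
  refine iSup_le fun x => le_trans (edist_triangle _ (g x) _) ?_
  exact add_le_add (le_iSup (fun y => edist (f y) (g y)) x)
    (le_iSup (fun y => edist (g y) (h y)) x)

/-- Zorn's lemma for minimal elements. -/
lemma zorn_min' {α : Type*} [Preorder α] (s : Set α)
    (ih : ∀ c ⊆ s, IsChain (· ≤ ·) c → ∀ y ∈ c, ∃ lb ∈ s, ∀ z ∈ c, lb ≤ z)
    (x : α) (hxs : x ∈ s) :
    ∃ m ∈ s, ∀ z ∈ s, z ≤ m → m ≤ z := by
  obtain ⟨m, -, hm⟩ := zorn_le_nonempty₀ (α := αᵒᵈ) s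
    (fun c hcs hc y hy => ih c hcs hc.symm y hy) x hxs
  exact ⟨m, hm.1, fun z hz hzm => hm.2 hz hzm⟩

end AuxStatement9

/-- If `(T_d, d∞)` is a metric space, there is a nonexpansive retraction
`φ : P_d → T_d` with `φ f ⪯ f`. -/
theorem statement9 {X : Type*} [Nonempty X] (d : X → X → ℝ)
    (hd : IsDistance d) (hne : (Td d).Nonempty)
    (hfin : ∀ f ∈ Td d, ∀ g ∈ Td d, dInfty f g ≠ ⊤) :
    ∃ φ : (X → ℝ) → (X → ℝ),
      (∀ f ∈ Pd d, φ f ∈ Td d ∧ φ f ≤ f) ∧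
      ∀ f ∈ Pd d, ∀ g ∈ Pd d, dInfty (φ f) (φ g) ≤ dInfty f g := by
  classical
  set S : Set ((X → ℝ) → (X → ℝ)) :=
    {ψ | (∀ f, f ∉ Pd d → ψ f = f) ∧ (∀ f ∈ Pd d, ψ f ∈ Pd d) ∧ (∀ f ∈ Pd d, ψ f ≤ f) ∧
      ∀ f ∈ Pd d, ∀ g ∈ Pd d, dInfty (ψ f) (ψ g) ≤ dInfty f g} with hSdef
  have hidS : id ∈ S := ⟨fun f _ => rfl, fun f hf => hf, fun f _ => le_rfl, fun f _ g _ => le_rfl⟩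
  -- chains have lower bounds
  have hchain : ∀ c ⊆ S, IsChain (· ≤ ·) c → ∀ ψ₀ ∈ c, ∃ lb ∈ S, ∀ z ∈ c, lb ≤ z := by
    intro c hcS hc ψ₀ hψ₀
    set A : (X → ℝ) → X → Set ℝ := fun f x => (fun χ => χ f x) '' c with hAdef
    have hAne : ∀ f x, (A f x).Nonempty := fun f x => ⟨ψ₀ f x, ψ₀, hψ₀, rfl⟩
    have hAbd : ∀ f, f ∈ Pd d → ∀ x, BddBelow (A f x) := by
      intro f hf x
      refine ⟨0, ?_⟩
      rintro r ⟨χ, hχ, rfl⟩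
      exact Pd_nonneg' hd ((hcS hχ).2.1 f hf) x
    set Ψ : (X → ℝ) → X → ℝ :=
      fun f => if hf : f ∈ Pd d then (fun x => sInf (A f x)) else f with hΨdef
    have hΨeq : ∀ f, f ∈ Pd d → ∀ x, Ψ f x = sInf (A f x) := by
      intro f hf x; simp only [hΨdef, dif_pos hf]
    have hΨle : ∀ χ ∈ c, ∀ f, f ∈ Pd d → ∀ x, Ψ f x ≤ χ f x := by
      intro χ hχ f hf x
      rw [hΨeq f hf x]
      exact csInf_le (hAbd f hf x) ⟨χ, hχ, rfl⟩
    have hΨPd : ∀ f, f ∈ Pd d → Ψ f ∈ Pd d := by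
      intro f hf x y
      have key : ∀ χ ∈ c, ∀ χ' ∈ c, d x y ≤ χ f x + χ' f y := by
        intro χ hχ χ' hχ'
        rcases hc.total hχ hχ' with h | h
        · have h1 : χ f y ≤ χ' f y := h f y
          have h2 := (hcS hχ).2.1 f hf x y
          linarith
        · have h1 : χ' f x ≤ χ f x := h f x
          have h2 := (hcS hχ').2.1 f hf x y
          linarith
      have step1 : ∀ χ ∈ c, d x y - χ f x ≤ Ψ f y := by
        intro χ hχ
        rw [hΨeq f hf y]
        refine le_csInf (hAne f y) ?_
        rintro r ⟨χ', hχ', rfl⟩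
        linarith [key χ hχ χ' hχ']
      have step2 : d x y - Ψ f y ≤ Ψ f x := by
        rw [hΨeq f hf x]
        refine le_csInf (hAne f x) ?_
        rintro r ⟨χ, hχ, rfl⟩
        linarith [step1 χ hχ]
      linarith
    refine ⟨Ψ, ⟨?_, hΨPd, ?_, ?_⟩, ?_⟩
    · intro f hf; simp only [hΨdef, dif_neg hf]
    · intro f hf x
      exact le_trans (hΨle ψ₀ hψ₀ f hf x) (((hcS hψ₀).2.2.1 f hf) x)
    · intro f hf g hg
      by_cases hD : dInfty f g = ⊤
      · rw [hD]; exact le_top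
      set r := (dInfty f g).toReal with hrdef
      have hr : ∀ χ ∈ c, ∀ x, |χ f x - χ g x| ≤ r := fun χ hχ x =>
        abs_le_of_le_dInfty' hD ((hcS hχ).2.2.2 f hf g hg) x
      have h1 : ∀ x, Ψ f x ≤ Ψ g x + r := by
        intro x
        have : Ψ f x - r ≤ Ψ g x := by
          rw [hΨeq g hg x]
          refine le_csInf (hAne g x) ?_
          rintro s ⟨χ, hχ, rfl⟩
          have := hΨle χ hχ f hf x
          have := hr χ hχ x
          rw [abs_le] at this
          linarith
        linarith
      have h2 : ∀ x, Ψ g x ≤ Ψ f x + r := by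
        intro x
        have : Ψ g x - r ≤ Ψ f x := by
          rw [hΨeq f hf x]
          refine le_csInf (hAne f x) ?_
          rintro s ⟨χ, hχ, rfl⟩
          have := hΨle χ hχ g hg x
          have := hr χ hχ x
          rw [abs_le] at this
          linarith
        linarith
      have := dInfty_le_ofReal' (f := Ψ f) (g := Ψ g) (r := r)
        (fun x => abs_le.2 ⟨by linarith [h2 x], by linarith [h1 x]⟩)
      rwa [hrdef, ENNReal.ofReal_toReal hD] at this
    · intro χ hχ f x
      by_cases hf : f ∈ Pd d
      · exact hΨle χ hχ f hf x
      · simp only [hΨdef, dif_neg hf, ((hcS hχ).1 f hf)]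
        exact le_rfl
  obtain ⟨ψ, hψS, hψmin⟩ := zorn_min' S hchain id hidS
  -- minimal ψ maps into the tight span
  have hTd : ∀ f₀ ∈ Pd d, ψ f₀ ∈ Td d := by
    intro f₀ hf₀
    refine ⟨hψS.2.1 f₀ hf₀, ?_⟩
    intro g hg hgle
    set ψ' : (X → ℝ) → X → ℝ := fun h =>
      if hh : h ∈ Pd d ∧ dInfty h f₀ ≠ ⊤ then
        (fun x => min (ψ h x) (g x + (dInfty h f₀).toReal))
      else ψ h with hψ'def
    have hgb : ∀ h, h ∈ Pd d → dInfty h f₀ ≠ ⊤ → ∀ x,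
        g x ≤ ψ h x + (dInfty h f₀).toReal := by
      intro h hh hfin x
      have h1 : |ψ h x - ψ f₀ x| ≤ (dInfty h f₀).toReal :=
        abs_le_of_le_dInfty' hfin (hψS.2.2.2 h hh f₀ hf₀) x
      rw [abs_le] at h1
      have h2 : g x ≤ ψ f₀ x := hgle x
      linarith [h1.1, h1.2]
    have hψ'S : ψ' ∈ S := by
      refine ⟨?_, ?_, ?_, ?_⟩
      · intro f hf
        have : ¬(f ∈ Pd d ∧ dInfty f f₀ ≠ ⊤) := fun h => hf h.1
        simp only [hψ'def, dif_neg this]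
        exact hψS.1 f hf
      · intro h hh
        by_cases hc : h ∈ Pd d ∧ dInfty h f₀ ≠ ⊤
        · intro x y
          simp only [hψ'def, dif_pos hc]
          set δ := (dInfty h f₀).toReal with hδdef
          have hδ0 : 0 ≤ δ := ENNReal.toReal_nonneg
          have hx := hgb h hh hc.2 x
          have hy := hgb h hh hc.2 y
          have hP := hψS.2.1 h hh x y
          have hGP := hg x y
          rcases min_cases (ψ h x) (g x + δ) with ⟨e1, -⟩ | ⟨e1, -⟩ <;>
            rcases min_cases (ψ h y) (g y + δ) with ⟨e2, -⟩ | ⟨e2, -⟩ <;>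
            rw [e1, e2] <;> linarith
        · simp only [hψ'def, dif_neg hc]
          exact hψS.2.1 h hh
      · intro h hh x
        by_cases hc : h ∈ Pd d ∧ dInfty h f₀ ≠ ⊤
        · simp only [hψ'def, dif_pos hc]
          exact le_trans (min_le_left _ _) (hψS.2.2.1 h hh x)
        · simp only [hψ'def, dif_neg hc]
          exact hψS.2.2.1 h hh x
      · intro h hh k hk
        by_cases hhk : dInfty h k = ⊤
        · rw [hhk]; exact le_top
        by_cases h1 : dInfty h f₀ = ⊤ <;> by_cases h2 : dInfty k f₀ = ⊤
        · have hch : ¬(h ∈ Pd d ∧ dInfty h f₀ ≠ ⊤) := fun hcc => hcc.2 h1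
          have hck : ¬(k ∈ Pd d ∧ dInfty k f₀ ≠ ⊤) := fun hcc => hcc.2 h2
          simp only [hψ'def, dif_neg hch, dif_neg hck]
          exact hψS.2.2.2 h hh k hk
        · exfalso
          have := dInfty_triangle' h k f₀
          rw [h1] at this
          exact (ENNReal.add_ne_top.2 ⟨hhk, h2⟩) (top_le_iff.1 this)
        · exfalso
          have := dInfty_triangle' k h f₀
          rw [h2, dInfty_comm' k h] at this
          exact (ENNReal.add_ne_top.2 ⟨hhk, h1⟩) (top_le_iff.1 this)
        · have hch : h ∈ Pd d ∧ dInfty h f₀ ≠ ⊤ := ⟨hh, h1⟩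
          have hck : k ∈ Pd d ∧ dInfty k f₀ ≠ ⊤ := ⟨hk, h2⟩
          set r := (dInfty h k).toReal with hrdef
          set δh := (dInfty h f₀).toReal with hδhdef
          set δk := (dInfty k f₀).toReal with hδkdef
          have hψr : ∀ x, |ψ h x - ψ k x| ≤ r := fun x =>
            abs_le_of_le_dInfty' hhk (hψS.2.2.2 h hh k hk) x
          have hδ1 : δh ≤ r + δk := by
            have ht := dInfty_triangle' h k f₀
            have hne' : dInfty h k + dInfty k f₀ ≠ ⊤ := ENNReal.add_ne_top.2 ⟨hhk, h2⟩
            have := ENNReal.toReal_mono hne' ht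
            rwa [ENNReal.toReal_add hhk h2] at this
          have hδ2 : δk ≤ r + δh := by
            have ht := dInfty_triangle' k h f₀
            have hne' : dInfty k h + dInfty h f₀ ≠ ⊤ := by
              rw [dInfty_comm' k h]; exact ENNReal.add_ne_top.2 ⟨hhk, h1⟩
            have := ENNReal.toReal_mono hne' ht
            rw [ENNReal.toReal_add (by rwa [dInfty_comm' k h]) h1, dInfty_comm' k h] at this
            exact this
          have key : ∀ x, |ψ' h x - ψ' k x| ≤ r := by
            intro x
            simp only [hψ'def, dif_pos hch, dif_pos hck]
            have habs := hψr x
            rw [abs_le] at habs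
            rw [abs_le]
            constructor
            · have : min (ψ k x) (g x + δk) ≤ min (ψ h x + r) (g x + δh + r) :=
                min_le_min (by linarith [habs.2]) (by linarith)
              rw [min_add_add_right] at this
              linarith
            · have : min (ψ h x) (g x + δh) ≤ min (ψ k x + r) (g x + δk + r) :=
                min_le_min (by linarith [habs.1]) (by linarith)
              rw [min_add_add_right] at this
              linarith
          have := dInfty_le_ofReal' key
          rwa [hrdef, ENNReal.ofReal_toReal hhk] at this
    have hle : ψ' ≤ ψ := by
      intro h x
      by_cases hc : h ∈ Pd d ∧ dInfty h f₀ ≠ ⊤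
      · simp only [hψ'def, dif_pos hc]
        exact min_le_left _ _
      · simp only [hψ'def, dif_neg hc]
        exact le_rfl
    have hmin := hψmin ψ' hψ'S hle
    have hcf₀ : f₀ ∈ Pd d ∧ dInfty f₀ f₀ ≠ ⊤ := by
      refine ⟨hf₀, ?_⟩
      rw [dInfty_self' f₀]
      exact ENNReal.zero_ne_top
    funext x
    have h1 : ψ f₀ x ≤ ψ' f₀ x := hmin f₀ x
    have h2 : ψ' f₀ x = min (ψ f₀ x) (g x + (dInfty f₀ f₀).toReal) := by
      simp only [hψ'def, dif_pos hcf₀]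
    rw [h2, dInfty_self' f₀, ENNReal.toReal_zero, add_zero] at h1
    have h3 : ψ f₀ x ≤ g x := le_trans h1 (min_le_right _ _)
    exact le_antisymm (hgle x) h3
  exact ⟨ψ, fun f hf => ⟨hTd f hf, hψS.2.2.1 f hf⟩, fun f hf g hg => hψS.2.2.2 f hf g hg⟩
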